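/- If every argument a of a may-must argumentation F has f_Q(a) = ((|pre(a)|, |pre(a)|), (1,1)), then every labelling λ of F is deterministic in the sense that for each argument a, λ designates exactly one label for a; specifically, λ designates in for a iff all attackers of a are labelled out, λ designates out for a iff some attacker of a is labelled in, and λ designates undec for a otherwise. -/
import Mathlib


inductive Lab : Type
  | inn | out | undec
deriving DecidableEq

structure MMA (A : Type) [Fintype A] [DecidableEq A] where
  R : A → A → Prop
  decR : DecidableRel R
  n1 : A → ℕ
  n2 : A → ℕ
  m1 : A → ℕ
  m2 : A → ℕ
  hn : ∀ a, n1 a ≤ n2 a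
  hm : ∀ a, m1 a ≤ m2 a

variable {A : Type} [Fintype A] [DecidableEq A]

/-- Number of attackers of `a` labelled `out` by `lam`. -/
def outCnt (F : MMA A) (lam : A → Lab) (a : A) : ℕ :=
  letI := F.decR
  (Finset.univ.filter (fun b => F.R b a ∧ lam b = Lab.out)).card

/-- Number of attackers of `a` labelled `in` by `lam`. -/
def inCnt (F : MMA A) (lam : A → Lab) (a : A) : ℕ :=
  letI := F.decR
  (Finset.univ.filter (fun b => F.R b a ∧ lam b = Lab.inn)).card

/-- `lam` designates label `l` for argument `a` in `F`. -/
def designates (F : MMA A) (lam : A → Lab) (a : A) : Lab → Prop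
  | Lab.inn => F.n1 a ≤ outCnt F lam a ∧ inCnt F lam a < F.m2 a
  | Lab.out => F.m1 a ≤ inCnt F lam a ∧ outCnt F lam a < F.n2 a
  | Lab.undec =>
      (F.n2 a ≤ outCnt F lam a ∧ F.m2 a ≤ inCnt F lam a) ∨
      (F.n1 a ≤ outCnt F lam a ∧ outCnt F lam a < F.n2 a) ∨
      (F.m1 a ≤ inCnt F lam a ∧ inCnt F lam a < F.m2 a) ∨
      (outCnt F lam a < F.n1 a ∧ inCnt F lam a < F.m1 a)

/-- `a`'s label is proper under `lam`. -/
def proper (F : MMA A) (lam : A → Lab) (a : A) : Prop :=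
  designates F lam a (lam a)

/-- Exact labelling: every argument's label is proper. -/
def exactLab (F : MMA A) (lam : A → Lab) : Prop :=
  ∀ a, proper F lam a

/-- Pre-maximally proper labelling. -/
def preMaxProper (F : MMA A) (lam : A → Lab) : Prop :=
  ∀ a, proper F lam a ∨ lam a = Lab.undec

/-- Maximally proper labelling. -/
def maxProper (F : MMA A) (lam : A → Lab) : Prop :=
  preMaxProper F lam ∧
    ∀ lam', preMaxProper F lam' → ∀ a, proper F lam' a → proper F lam a

/-- The order `⪯` on labellings. -/
def labLE (l1 l2 : A → Lab) : Prop :=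
  ∀ a, (l1 a = Lab.inn → l2 a = Lab.inn) ∧ (l1 a = Lab.out → l2 a = Lab.out)

/-- Number of attackers of `a`. -/
def preCard (F : MMA A) (a : A) : ℕ :=
  letI := F.decR
  (Finset.univ.filter (fun b => F.R b a)).card

lemma outCnt_le (F : MMA A) (lam : A → Lab) (a : A) : outCnt F lam a ≤ preCard F a := by
  letI := F.decR
  unfold outCnt preCard
  exact Finset.card_le_card (fun x hx => by
    simp only [Finset.mem_filter] at *; exact ⟨hx.1, hx.2.1⟩)

lemma outCnt_eq_iff (F : MMA A) (lam : A → Lab) (a : A) :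
    outCnt F lam a = preCard F a ↔ ∀ b, F.R b a → lam b = Lab.out := by
  letI := F.decR
  unfold outCnt preCard
  constructor
  · intro hc b hb
    have hsub : (Finset.univ.filter (fun b => F.R b a ∧ lam b = Lab.out)) ⊆
        Finset.univ.filter (fun b => F.R b a) := by
      intro x hx; simp only [Finset.mem_filter] at *; exact ⟨hx.1, hx.2.1⟩
    have := Finset.eq_of_subset_of_card_le hsub (le_of_eq hc.symm)
    have hb' : b ∈ Finset.univ.filter (fun b => F.R b a) := by simpa using hb
    rw [← this] at hb'
    simp only [Finset.mem_filter] at hb'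
    exact hb'.2.2
  · intro hall
    congr 1
    ext b; simp only [Finset.mem_filter, Finset.mem_univ, true_and]
    exact ⟨fun h => h.1, fun h => ⟨h, hall b h⟩⟩

lemma inCnt_pos_iff (F : MMA A) (lam : A → Lab) (a : A) :
    1 ≤ inCnt F lam a ↔ ∃ b, F.R b a ∧ lam b = Lab.inn := by
  letI := F.decR
  unfold inCnt
  rw [Nat.one_le_iff_ne_zero, Ne, Finset.card_eq_zero, ← Ne,
    ← Finset.nonempty_iff_ne_empty]
  constructor
  · rintro ⟨b, hb⟩; simp only [Finset.mem_filter] at hb; exact ⟨b, hb.2⟩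
  · rintro ⟨b, hb⟩; exact ⟨b, by simp [hb.1, hb.2]⟩

lemma all_out_inCnt (F : MMA A) (lam : A → Lab) (a : A)
    (hall : ∀ b, F.R b a → lam b = Lab.out) : inCnt F lam a = 0 := by
  letI := F.decR
  unfold inCnt
  rw [Finset.card_eq_zero, Finset.filter_eq_empty_iff]
  intro b _
  rintro ⟨hb, hin⟩
  have := hall b hb
  rw [this] at hin
  exact absurd hin (by simp)

lemma ex_in_outCnt (F : MMA A) (lam : A → Lab) (a : A)
    (hex : ∃ b, F.R b a ∧ lam b = Lab.inn) : outCnt F lam a < preCard F a := by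
  have hne : outCnt F lam a ≠ preCard F a := by
    intro heq
    have hall := (outCnt_eq_iff F lam a).mp heq
    obtain ⟨b, hb, hin⟩ := hex
    have := hall b hb
    rw [this] at hin; exact absurd hin (by simp)
  exact lt_of_le_of_ne (outCnt_le F lam a) hne

theorem stmt11 (F : MMA A)
    (h : ∀ a, F.n1 a = preCard F a ∧ F.n2 a = preCard F a ∧ F.m1 a = 1 ∧ F.m2 a = 1) :
    ∀ (lam : A → Lab) (a : A),
      (designates F lam a Lab.inn ↔ ∀ b, F.R b a → lam b = Lab.out) ∧
      (designates F lam a Lab.out ↔ ∃ b, F.R b a ∧ lam b = Lab.inn) ∧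
      (designates F lam a Lab.undec ↔
        ¬ (∀ b, F.R b a → lam b = Lab.out) ∧ ¬ (∃ b, F.R b a ∧ lam b = Lab.inn)) ∧
      (∃! l : Lab, designates F lam a l) := by
  intro lam a
  obtain ⟨h1, h2, h3, h4⟩ := h a
  have hin : designates F lam a Lab.inn ↔ ∀ b, F.R b a → lam b = Lab.out := by
    simp only [designates, h1, h4]
    constructor
    · intro ⟨ho, _⟩
      exact (outCnt_eq_iff F lam a).mp (le_antisymm (outCnt_le F lam a) ho)
    · intro hall
      refine ⟨le_of_eq ((outCnt_eq_iff F lam a).mpr hall).symm, ?_⟩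
      rw [all_out_inCnt F lam a hall]; norm_num
  have hout : designates F lam a Lab.out ↔ ∃ b, F.R b a ∧ lam b = Lab.inn := by
    simp only [designates, h2, h3]
    constructor
    · intro ⟨hi, _⟩; exact (inCnt_pos_iff F lam a).mp hi
    · intro hex
      exact ⟨(inCnt_pos_iff F lam a).mpr hex, ex_in_outCnt F lam a hex⟩
  have hund : designates F lam a Lab.undec ↔
      ¬ (∀ b, F.R b a → lam b = Lab.out) ∧ ¬ (∃ b, F.R b a ∧ lam b = Lab.inn) := by
    simp only [designates, h1, h2, h3, h4]
    constructor
    · rintro (⟨ho, hi⟩ | ⟨ho, ho'⟩ | ⟨hi, hi'⟩ | ⟨ho, hi⟩)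
      · exfalso
        have heq := le_antisymm (outCnt_le F lam a) ho
        have hall := (outCnt_eq_iff F lam a).mp heq
        rw [all_out_inCnt F lam a hall] at hi; omega
      · omega
      · omega
      · constructor
        · intro hall
          exact absurd ((outCnt_eq_iff F lam a).mpr hall) (by omega)
        · intro hex
          exact absurd ((inCnt_pos_iff F lam a).mpr hex) (by omega)
    · intro ⟨hno, hne⟩
      have ho : outCnt F lam a < preCard F a :=
        lt_of_le_of_ne (outCnt_le F lam a) (fun h => hno ((outCnt_eq_iff F lam a).mp h))
      have hi : inCnt F lam a < 1 := by
        by_contra hc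
        exact hne ((inCnt_pos_iff F lam a).mp (by omega))
      exact Or.inr (Or.inr (Or.inr ⟨ho, hi⟩))
  refine ⟨hin, hout, hund, ?_⟩
  by_cases hall : ∀ b, F.R b a → lam b = Lab.out
  · refine ⟨Lab.inn, hin.mpr hall, ?_⟩
    intro l hl
    cases l with
    | inn => rfl
    | out =>
        obtain ⟨b, hb, hbin⟩ := hout.mp hl
        have := hall b hb; rw [this] at hbin; exact absurd hbin (by simp)
    | undec => exact absurd hall (hund.mp hl).1
  · by_cases hex : ∃ b, F.R b a ∧ lam b = Lab.inn
    · refine ⟨Lab.out, hout.mpr hex, ?_⟩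
      intro l hl
      cases l with
      | out => rfl
      | inn =>
          obtain ⟨b, hb, hbin⟩ := hex
          have := hin.mp hl b hb; rw [this] at hbin; exact absurd hbin (by simp)
      | undec => exact absurd hex (hund.mp hl).2
    · refine ⟨Lab.undec, hund.mpr ⟨hall, hex⟩, ?_⟩
      intro l hl
      cases l with
      | undec => rfl
      | inn => exact absurd (hin.mp hl) hall
      | out => exact absurd (hout.mp hl) hex
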